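/- arXiv:2506.11979 — 3 statements merged into one kernel-verified Lean document; each statement's English description precedes it below -/
import Mathlib

section
/- Let T be a simple graph with no cycles (a forest), G a connected simple graph, and f : V(G) → V(T) a function mapping adjacent vertices of G to adjacent vertices of T. If a and b are adjacent vertices of T and both a and b lie in the image of f, then there exist adjacent vertices u, v of G with f(u) = a and f(v) = b. -/
theorem stmt2 {VT VG : Type*} (T : SimpleGraph VT) (G : SimpleGraph VG)
    (hT : T.IsAcyclic) (hG : G.Connected) (f : VG → VT)
    (hf : ∀ u v, G.Adj u v → T.Adj (f u) (f v))
    (a b : VT) (hab : T.Adj a b) (ha : a ∈ Set.range f) (hb : b ∈ Set.range f) :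
    ∃ u v, G.Adj u v ∧ f u = a ∧ f v = b := by
  obtain ⟨x, hx⟩ := ha
  obtain ⟨y, hy⟩ := hb
  set T' := T.deleteEdges {s(a, b)} with hT'
  have hbridge : T.IsBridge s(a, b) :=
    (SimpleGraph.isAcyclic_iff_forall_adj_isBridge.mp hT) hab
  have hnr : ¬ T'.Reachable a b := by
    rw [SimpleGraph.isBridge_iff] at hbridge
    exact hbridge
  -- main lemma by induction on a walk
  have key : ∀ (x y : VG) (p : G.Walk x y), T'.Reachable a (f x) →
      ¬ T'.Reachable a (f y) → ∃ u v, G.Adj u v ∧ f u = a ∧ f v = b := by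
    intro x y p
    induction p with
    | nil => intro h1 h2; exact absurd h1 h2
    | @cons u v w h p ih =>
      intro h1 h2
      by_cases hv : T'.Reachable a (f v)
      · exact ih hv h2
      · -- the step u → v crosses
        have hadj : T.Adj (f u) (f v) := hf u v h
        have hdel : ¬ T'.Adj (f u) (f v) := by
          intro hA
          exact hv (h1.trans hA.reachable)
        have hmem : s(f u, f v) = s(a, b) := by
          by_contra hne
          exact hdel (SimpleGraph.deleteEdges_adj.mpr ⟨hadj, by simpa using hne⟩)
        rw [Sym2.eq_iff] at hmem
        rcases hmem with ⟨h1', h2'⟩ | ⟨h1', h2'⟩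
        · exact ⟨u, v, h, h1', h2'⟩
        · exfalso
          rw [h1'] at h1
          exact hnr h1
  have hreach : G.Reachable x y := hG x y
  obtain ⟨p⟩ := hreach
  refine key x y p ?_ ?_
  · rw [hx]
  · rw [hy]; exact fun h => hnr h
end

section
/- Let g, h : ℝ → ℝ with g upper semicontinuous, h lower semicontinuous, and g(y) ≤ h(y) for all y ∈ ℝ. Then there exists a continuous function f : ℝ → ℝ with g(y) ≤ f(y) ≤ h(y) for all y ∈ ℝ. -/
open Set Filter Topology

private lemma usc_max' {G c : ℝ → ℝ} (hG : UpperSemicontinuous G) (hc : Continuous c) :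
    UpperSemicontinuous (fun y => max (G y) (c y)) := by
  rw [upperSemicontinuous_iff_isOpen_preimage]
  intro y
  have : (fun x => max (G x) (c x)) ⁻¹' Iio y = G ⁻¹' Iio y ∩ c ⁻¹' Iio y := by
    ext x; simp [max_lt_iff]
  rw [this]
  exact (hG.isOpen_preimage y).inter (isOpen_Iio.preimage hc)

private lemma lsc_min' {H c : ℝ → ℝ} (hH : LowerSemicontinuous H) (hc : Continuous c) :
    LowerSemicontinuous (fun y => min (H y) (c y)) := by
  rw [lowerSemicontinuous_iff_isOpen_preimage]
  intro y
  have : (fun x => min (H x) (c x)) ⁻¹' Ioi y = H ⁻¹' Ioi y ∩ c ⁻¹' Ioi y := by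
    ext x; simp [lt_min_iff]
  rw [this]
  exact (hH.isOpen_preimage y).inter (isOpen_Ioi.preimage hc)

private lemma approx_insert (G H : ℝ → ℝ) (hG : UpperSemicontinuous G)
    (hH : LowerSemicontinuous H) (hGH : ∀ y, G y ≤ H y) {ε : ℝ} (hε : 0 < ε) :
    ∃ f : ℝ → ℝ, Continuous f ∧ ∀ y, G y - ε < f y ∧ f y < H y + ε := by
  have key : ∀ x : ℝ, ∃ c : ℝ, ∀ᶠ y in 𝓝 x, c ∈ Ioo (G y - ε) (H y + ε) := by
    intro x
    refine ⟨G x, ?_⟩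
    have hopen : IsOpen (G ⁻¹' Iio (G x + ε) ∩ H ⁻¹' Ioi (G x - ε)) :=
      (hG.isOpen_preimage _).inter (hH.isOpen_preimage _)
    have hx : x ∈ G ⁻¹' Iio (G x + ε) ∩ H ⁻¹' Ioi (G x - ε) := by
      constructor
      · exact lt_add_of_pos_right _ hε
      · have := hGH x; simp only [mem_preimage, mem_Ioi]; linarith
    filter_upwards [hopen.mem_nhds hx] with y hy
    obtain ⟨h1, h2⟩ := hy
    simp only [mem_preimage, mem_Iio] at h1
    simp only [mem_preimage, mem_Ioi] at h2
    exact ⟨by linarith, by linarith⟩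
  obtain ⟨f, hf⟩ := exists_continuous_forall_mem_convex_of_local_const
    (t := fun y => Ioo (G y - ε) (H y + ε)) (fun y => convex_Ioo _ _) key
  exact ⟨f, f.continuous, fun y => ⟨(hf y).1, (hf y).2⟩⟩

open Classical in
/-- Auxiliary: pick an approximate insertion, total function. -/
private noncomputable def pickF (G H : ℝ → ℝ) (ε : ℝ) : ℝ → ℝ :=
  if hc : UpperSemicontinuous G ∧ LowerSemicontinuous H ∧ (∀ y, G y ≤ H y) ∧ 0 < ε then
    (approx_insert G H hc.1 hc.2.1 hc.2.2.1 hc.2.2.2).choose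
  else 0

private lemma pickF_spec {G H : ℝ → ℝ} {ε : ℝ} (hG : UpperSemicontinuous G)
    (hH : LowerSemicontinuous H) (hGH : ∀ y, G y ≤ H y) (hε : 0 < ε) :
    Continuous (pickF G H ε) ∧ ∀ y, G y - ε < pickF G H ε y ∧ pickF G H ε y < H y + ε := by
  rw [pickF, dif_pos ⟨hG, hH, hGH, hε⟩]
  exact (approx_insert G H hG hH hGH hε).choose_spec

/-- The iterated pairs (Gₙ, Hₙ). -/
private noncomputable def GHseq (g h : ℝ → ℝ) : ℕ → ((ℝ → ℝ) × (ℝ → ℝ))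
  | 0 => (g, h)
  | n + 1 =>
      let p := GHseq g h n
      let f := pickF p.1 p.2 ((1 / 2 : ℝ) ^ n)
      (fun y => max (p.1 y) (f y - (1 / 2 : ℝ) ^ n),
       fun y => min (p.2 y) (f y + (1 / 2 : ℝ) ^ n))

private noncomputable def fseq (g h : ℝ → ℝ) (n : ℕ) : ℝ → ℝ :=
  pickF (GHseq g h n).1 (GHseq g h n).2 ((1 / 2 : ℝ) ^ n)

private lemma eps_pos (n : ℕ) : (0 : ℝ) < (1 / 2 : ℝ) ^ n := by positivity

private lemma GHseq_inv (g h : ℝ → ℝ) (hg : UpperSemicontinuous g)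
    (hh : LowerSemicontinuous h) (hgh : ∀ y, g y ≤ h y) (n : ℕ) :
    UpperSemicontinuous (GHseq g h n).1 ∧ LowerSemicontinuous (GHseq g h n).2 ∧
      (∀ y, (GHseq g h n).1 y ≤ (GHseq g h n).2 y) ∧
      (∀ y, g y ≤ (GHseq g h n).1 y ∧ (GHseq g h n).2 y ≤ h y) := by
  induction n with
  | zero => exact ⟨hg, hh, hgh, fun y => ⟨le_rfl, le_rfl⟩⟩
  | succ n ih =>
    obtain ⟨hG, hH, hGH, hgle⟩ := ih
    obtain ⟨hfc, hfb⟩ := pickF_spec hG hH hGH (eps_pos n)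
    refine ⟨?_, ?_, ?_, ?_⟩
    · exact usc_max' hG (hfc.sub continuous_const)
    · exact lsc_min' hH (hfc.add continuous_const)
    · intro y
      obtain ⟨h1, h2⟩ := hfb y
      have h3 := hGH y
      have h4 := eps_pos n
      simp only [GHseq, le_min_iff, max_le_iff]
      constructor <;> constructor <;> linarith
    · intro y
      have h1 := (hgle y).1
      have h2 := (hgle y).2
      constructor
      · exact le_trans h1 (le_max_left _ _)
      · exact le_trans (min_le_left _ _) h2

private lemma fseq_spec (g h : ℝ → ℝ) (hg : UpperSemicontinuous g)
    (hh : LowerSemicontinuous h) (hgh : ∀ y, g y ≤ h y) (n : ℕ) :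
    Continuous (fseq g h n) ∧
      ∀ y, (GHseq g h n).1 y - (1 / 2 : ℝ) ^ n < fseq g h n y ∧
        fseq g h n y < (GHseq g h n).2 y + (1 / 2 : ℝ) ^ n := by
  obtain ⟨hG, hH, hGH, _⟩ := GHseq_inv g h hg hh hgh n
  rw [fseq]
  exact pickF_spec hG hH hGH (eps_pos n)

set_option maxHeartbeats 1000000 in
theorem stmt13 (g h : ℝ → ℝ) (hg : UpperSemicontinuous g) (hh : LowerSemicontinuous h)
    (hgh : ∀ y, g y ≤ h y) :
    ∃ f : ℝ → ℝ, Continuous f ∧ ∀ y, g y ≤ f y ∧ f y ≤ h y := by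
  set ε : ℕ → ℝ := fun n => (1 / 2 : ℝ) ^ n with hε
  have hcont : ∀ n, Continuous (fseq g h n) := fun n => (fseq_spec g h hg hh hgh n).1
  -- pointwise bounds vs g, h
  have hbound : ∀ n y, g y - ε n < fseq g h n y ∧ fseq g h n y < h y + ε n := by
    intro n y
    obtain ⟨_, _, _, hgle⟩ := GHseq_inv g h hg hh hgh n
    obtain ⟨h1, h2⟩ := (fseq_spec g h hg hh hgh n).2 y
    have h3 := (hgle y).1
    have h4 := (hgle y).2
    exact ⟨by linarith, by linarith⟩
  -- successive differences
  have hdiff : ∀ n y, |fseq g h (n + 1) y - fseq g h n y| ≤ ε n + ε (n + 1) := by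
    intro n y
    obtain ⟨h1, h2⟩ := (fseq_spec g h hg hh hgh (n + 1)).2 y
    have hG1 : (GHseq g h (n + 1)).1 y = max ((GHseq g h n).1 y) (fseq g h n y - ε n) := rfl
    have hH1 : (GHseq g h (n + 1)).2 y = min ((GHseq g h n).2 y) (fseq g h n y + ε n) := rfl
    rw [hG1] at h1
    rw [hH1] at h2
    have h3 : fseq g h n y - ε n ≤ max ((GHseq g h n).1 y) (fseq g h n y - ε n) :=
      le_max_right _ _
    have h4 : min ((GHseq g h n).2 y) (fseq g h n y + ε n) ≤ fseq g h n y + ε n :=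
      min_le_right _ _
    rw [abs_le]
    constructor <;> linarith
  -- the limit function
  set d : ℕ → ℝ → ℝ := fun n y => fseq g h (n + 1) y - fseq g h n y with hd
  set u : ℕ → ℝ := fun n => ε n + ε (n + 1) with hu
  have hS : Summable (fun n : ℕ => (1 / 2 : ℝ) ^ n) :=
    summable_geometric_of_lt_one (by norm_num) (by norm_num)
  have hS2 : Summable (fun n : ℕ => (1 / 2 : ℝ) ^ (n + 1)) := by
    simpa [pow_succ] using hS.mul_right (1 / 2 : ℝ)
  have hSu : Summable u := hS.add hS2
  have hdb : ∀ n y, ‖d n y‖ ≤ u n := fun n y => hdiff n y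
  have hdc : ∀ n, Continuous (d n) := fun n => (hcont (n + 1)).sub (hcont n)
  have hFc : Continuous fun y => ∑' n, d n y := continuous_tsum hdc hSu hdb
  refine ⟨fun y => fseq g h 0 y + ∑' n, d n y, (hcont 0).add hFc, fun y => ?_⟩
  set F : ℝ → ℝ := fun y => fseq g h 0 y + ∑' n, d n y with hF
  -- fseq n y → F y
  have hsum : Summable fun n => d n y :=
    Summable.of_norm_bounded hSu (fun n => hdb n y)
  have htend : Tendsto (fun n => fseq g h n y) atTop (𝓝 (F y)) := by
    have h1 := hsum.hasSum.tendsto_sum_nat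
    have h2 : ∀ n, ∑ i ∈ Finset.range n, d i y = fseq g h n y - fseq g h 0 y := by
      intro n
      exact Finset.sum_range_sub (fun i => fseq g h i y) n
    have h3 : Tendsto (fun n => fseq g h n y - fseq g h 0 y) atTop (𝓝 (∑' n, d n y)) := by
      simpa only [h2] using h1
    have h4 : Tendsto (fun n => fseq g h n y - fseq g h 0 y + fseq g h 0 y) atTop
        (𝓝 (∑' n, d n y + fseq g h 0 y)) :=
      h3.add (tendsto_const_nhds (x := fseq g h 0 y))
    simpa [hF, sub_add_cancel, add_comm] using h4
  have hεt : Tendsto ε atTop (𝓝 0) := by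
    simpa [hε] using tendsto_pow_atTop_nhds_zero_of_lt_one (by norm_num : (0:ℝ) ≤ 1/2)
      (by norm_num : (1/2 : ℝ) < 1)
  constructor
  · have hl : Tendsto (fun n => g y - ε n) atTop (𝓝 (g y)) := by
      simpa using tendsto_const_nhds.sub hεt
    exact le_of_tendsto_of_tendsto' hl htend fun n => (hbound n y).1.le
  · have hr : Tendsto (fun n => h y + ε n) atTop (𝓝 (h y)) := by
      simpa using tendsto_const_nhds.add hεt
    exact le_of_tendsto_of_tendsto' htend hr fun n => (hbound n y).2.le
end

section
/- Let X be a topological space, A ⊆ X a connected subset, and U_1,…,U_m open subsets of X covering A such that the nerve graph N (with vertex set {1,…,m} and i adjacent to j iff i ≠ j and U_i ∩ U_j ≠ ∅) is a tree. If A ∩ U_i ≠ ∅ and A ∩ U_j ≠ ∅, then A ∩ U_k ≠ ∅ for every vertex k lying on the (unique) path from i to j in N. -/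
theorem stmt16 {X : Type*} [TopologicalSpace X] (A : Set X) (hA : IsPreconnected A)
    (m : ℕ) (U : Fin m → Set X) (hopen : ∀ i, IsOpen (U i)) (hcover : A ⊆ ⋃ i, U i)
    (htree : (SimpleGraph.fromRel fun i j : Fin m => (U i ∩ U j).Nonempty).IsTree)
    (i j : Fin m) (hi : (A ∩ U i).Nonempty) (hj : (A ∩ U j).Nonempty) (k : Fin m)
    (p : (SimpleGraph.fromRel fun i j : Fin m => (U i ∩ U j).Nonempty).Walk i j)
    (hp : p.IsPath) (hk : k ∈ p.support) :
    (A ∩ U k).Nonempty := by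
  classical
  set G := SimpleGraph.fromRel fun i j : Fin m => (U i ∩ U j).Nonempty with hG
  rcases eq_or_ne k i with rfl | hki
  · exact hi
  rcases eq_or_ne k j with rfl | hkj
  · exact hj
  by_contra hAk
  rw [Set.not_nonempty_iff_eq_empty] at hAk
  -- the graph with k deleted
  let H : SimpleGraph (Fin m) :=
    { Adj := fun v w => G.Adj v w ∧ v ≠ k ∧ w ≠ k
      symm := ⟨fun v w h => ⟨h.1.symm, h.2.2, h.2.1⟩⟩
      loopless := ⟨fun v h => G.loopless.irrefl v h.1⟩ }
  have hle : H ≤ G := fun v w h => h.1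
  -- any H-walk starting away from k avoids k
  have hav : ∀ {a b : Fin m} (w : H.Walk a b), a ≠ k → ∀ v ∈ w.support, v ≠ k := by
    intro a b w
    induction w with
    | nil => intro ha v hv; simp at hv; subst hv; exact ha
    | cons h q ih =>
      intro ha v hv
      rw [SimpleGraph.Walk.support_cons] at hv
      rcases List.mem_cons.1 hv with rfl | hv
      · exact ha
      · exact ih h.2.2 v hv
  -- i and j are not H-reachable
  have hnr : ¬ H.Reachable i j := by
    rintro ⟨w⟩
    have hkw : ∀ v ∈ w.support, v ≠ k := hav w hki.symm
    let q : G.Walk i j := w.mapLe hle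
    have hqsup : ∀ v ∈ q.support, v ≠ k := by
      intro v hv
      rw [show q.support = w.support by
        rw [show q = w.map (SimpleGraph.Hom.ofLE hle) from rfl,
          SimpleGraph.Walk.support_map,
          show ⇑(SimpleGraph.Hom.ofLE hle) = id from rfl, List.map_id]] at hv
      exact hkw v hv
    have hbp : q.bypass.IsPath := SimpleGraph.Walk.bypass_isPath q
    have := (htree.existsUnique_path i j).unique hbp hp
    have hkb : k ∈ q.bypass.support := this ▸ hk
    exact hqsup k (q.support_bypass_subset hkb) rfl
  -- the component of i
  set C : Set (Fin m) := {v | H.Reachable i v} with hC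
  have hiC : i ∈ C := ⟨SimpleGraph.Walk.nil⟩
  have hjC : j ∉ C := hnr
  have hkC : k ∉ C := by
    rintro ⟨w⟩
    exact hav w hki.symm k w.end_mem_support rfl
  set V : Set X := ⋃ v ∈ C, U v with hV
  set W : Set X := ⋃ v ∈ {v | v ∉ C ∧ v ≠ k}, U v with hW
  have hVo : IsOpen V := isOpen_biUnion fun v _ => hopen v
  have hWo : IsOpen W := isOpen_biUnion fun v _ => hopen v
  have hcov : A ⊆ V ∪ W := by
    intro x hx
    obtain ⟨_, ⟨v, rfl⟩, hxv⟩ := hcover hx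
    by_cases hv : v ∈ C
    · exact Or.inl (Set.mem_biUnion hv hxv)
    · have hvk : v ≠ k := by
        rintro rfl
        exact absurd (Set.mem_inter hx hxv) (by simp [hAk])
      exact Or.inr (Set.mem_biUnion ⟨hv, hvk⟩ hxv)
  have hAV : (A ∩ V).Nonempty := by
    obtain ⟨x, hxA, hxU⟩ := hi
    exact ⟨x, hxA, Set.mem_biUnion hiC hxU⟩
  have hAW : (A ∩ W).Nonempty := by
    obtain ⟨x, hxA, hxU⟩ := hj
    exact ⟨x, hxA, Set.mem_biUnion ⟨hjC, hkj.symm⟩ hxU⟩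
  obtain ⟨x, _, hxV, hxW⟩ := hA V W hVo hWo hcov hAV hAW
  obtain ⟨_, ⟨v, rfl⟩, _, ⟨hvC, rfl⟩, hxv⟩ := hxV
  obtain ⟨_, ⟨w, rfl⟩, _, ⟨hw, rfl⟩, hxw⟩ := hxW
  have hvw : v ≠ w := by rintro rfl; exact hw.1 hvC
  have hGvw : G.Adj v w := by
    rw [hG, SimpleGraph.fromRel_adj]
    exact ⟨hvw, Or.inl ⟨x, hxv, hxw⟩⟩
  have hvk : v ≠ k := by rintro rfl; exact hkC hvC
  have : w ∈ C := hvC.trans ⟨SimpleGraph.Walk.cons ⟨hGvw, hvk, hw.2⟩ SimpleGraph.Walk.nil⟩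
  exact hw.1 this
end
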